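/- Assume each ℓ_i is convex and (1/γ)-smooth with γ > 0, and ‖x_i‖ ≤ 1 for all i. Fix a block k and w̄ ∈ ℝ^d, and suppose β* ∈ ℝ^{n_k} maximizes D_k(·; w̄). Let β^(H) be the random result of running LocalSDCA for H iterations on block k with fixed w̄, starting from any β^(0) ∈ ℝ^{n_k}. Then, with s := λnγ/(1+λnγ): E[D_k(β*; w̄) − D_k(β^(H); w̄)] ≤ (1 − s/n_k)^H · (D_k(β*; w̄) − D_k(β^(0); w̄)). -/

import Mathlib

open Finset MeasureTheory

noncomputable section

/-- Squared Euclidean norm of a finite real vector. -/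
def sqnorm {m : ℕ} (v : Fin m → ℝ) : ℝ := ∑ j, v j ^ 2

/-- Euclidean norm of a finite real vector. -/
def euclNorm {m : ℕ} (v : Fin m → ℝ) : ℝ := Real.sqrt (sqnorm v)

/-- Euclidean inner product. -/
def dotp {m : ℕ} (u v : Fin m → ℝ) : ℝ := ∑ j, u j * v j

/-- `g` is the (real-valued) Fenchel conjugate of `f`:
`g u` is the least upper bound of `z ↦ u*z - f z`. -/
def IsFenchelConj (f g : ℝ → ℝ) : Prop :=
  ∀ u : ℝ, IsLUB (Set.range fun z : ℝ => u * z - f z) (g u)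

/-- `f` is smooth with constant `c`: differentiable with `c`-Lipschitz derivative. -/
def SmoothWith (c : ℝ) (f : ℝ → ℝ) : Prop :=
  Differentiable ℝ f ∧ ∀ z z' : ℝ, |deriv f z - deriv f z'| ≤ c * |z - z'|

/-- `g : ℝ → ℝ` is `γ`-strongly convex. -/
def StrongConvexWith (γ : ℝ) (g : ℝ → ℝ) : Prop :=
  ConvexOn ℝ Set.univ fun u => g u - γ / 2 * u ^ 2

variable {n d K : ℕ}

/-- `A α` where the `i`-th column of `A` is `x i / (λ n)`. -/
def matA (lam : ℝ) (x : Fin n → Fin d → ℝ) (α : Fin n → ℝ) : Fin d → ℝ :=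
  ∑ i, (α i / (lam * n)) • x i

/-- The block-`k` subvector `α_[k]` of `α`. -/
def blkOf (part : Fin n → Fin K) (k : Fin K) (α : Fin n → ℝ) :
    {i : Fin n // part i = k} → ℝ :=
  fun i => α i.1

/-- `A_[k] β`: the block-`k` submatrix of `A` applied to a block-`k` vector. -/
def blkA (lam : ℝ) (x : Fin n → Fin d → ℝ) (part : Fin n → Fin K) (k : Fin K)
    (β : {i : Fin n // part i = k} → ℝ) : Fin d → ℝ :=
  ∑ i : {i : Fin n // part i = k}, (β i / (lam * n)) • x i.1

/-- `α⟨k←β⟩`: replace the block-`k` coordinates of `α` by `β`. -/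
def updBlk (part : Fin n → Fin K) (k : Fin K) (α : Fin n → ℝ)
    (β : {i : Fin n // part i = k} → ℝ) : Fin n → ℝ :=
  fun i => if h : part i = k then β ⟨i, h⟩ else α i

/-- `ι_k β`: zero-padding of a block-`k` vector to a full vector. -/
def padBlk (part : Fin n → Fin K) (k : Fin K)
    (β : {i : Fin n // part i = k} → ℝ) : Fin n → ℝ :=
  fun i => if h : part i = k then β ⟨i, h⟩ else 0

/-- The primal objective `P(w)`. -/
def primalObj (lam : ℝ) (x : Fin n → Fin d → ℝ) (l : Fin n → ℝ → ℝ)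
    (w : Fin d → ℝ) : ℝ :=
  lam / 2 * sqnorm w + (1 / (n : ℝ)) * ∑ i, l i (dotp w (x i))

/-- The dual objective `D(α)`. -/
def dualObj (lam : ℝ) (x : Fin n → Fin d → ℝ) (lstar : Fin n → ℝ → ℝ)
    (α : Fin n → ℝ) : ℝ :=
  -(lam / 2) * sqnorm (matA lam x α) - (1 / (n : ℝ)) * ∑ i, lstar i (-(α i))

/-- The local suboptimality `ε_{D,k}(α)` on block `k`. -/
def epsD (lam : ℝ) (x : Fin n → Fin d → ℝ) (lstar : Fin n → ℝ → ℝ)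
    (part : Fin n → Fin K) (k : Fin K) (α : Fin n → ℝ) : ℝ :=
  ⨆ β : {i : Fin n // part i = k} → ℝ,
    dualObj lam x lstar (updBlk part k α β) - dualObj lam x lstar α

/-- `σ_min`: the supremum over nonzero `α` of
`λ²n²·(Σ_k ‖A_[k]α_[k]‖² − ‖Aα‖²)/‖α‖²`. -/
def sigmaMin (lam : ℝ) (x : Fin n → Fin d → ℝ) (part : Fin n → Fin K) : ℝ :=
  sSup { r : ℝ | ∃ α : Fin n → ℝ, α ≠ 0 ∧
    r = lam ^ 2 * (n : ℝ) ^ 2 *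
      ((∑ k, sqnorm (blkA lam x part k (blkOf part k α))) - sqnorm (matA lam x α)) /
        sqnorm α }

/-- The local dual objective `D_k(β; w̄)` on block `k`. -/
def locDual (lam : ℝ) (x : Fin n → Fin d → ℝ) (lstar : Fin n → ℝ → ℝ)
    (part : Fin n → Fin K) (k : Fin K) (wbar : Fin d → ℝ)
    (β : {i : Fin n // part i = k} → ℝ) : ℝ :=
  -(lam / 2) * sqnorm (wbar + blkA lam x part k β)
    - (1 / (n : ℝ)) * ∑ i : {i : Fin n // part i = k}, lstar i.1 (-(β i))
    + lam / 2 * sqnorm wbar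

/-- The local primal objective `P_k(v; w̄)` on block `k`. -/
def locPrimal (lam : ℝ) (x : Fin n → Fin d → ℝ) (l : Fin n → ℝ → ℝ)
    (part : Fin n → Fin K) (k : Fin K) (wbar v : Fin d → ℝ) : ℝ :=
  (1 / (n : ℝ)) * ∑ i : {i : Fin n // part i = k}, l i.1 (dotp (wbar + v) (x i.1))
    + lam / 2 * sqnorm v

/-- Run `H` iterations of the coordinate-wise step `st`, where `ω` lists
the (randomly chosen) coordinates used in the successive iterations. -/
def iterRun {γ : Type*} {ι : Type*} (st : ι → γ → γ) :
    (H : ℕ) → (Fin H → ι) → γ → γ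
  | 0, _, b => b
  | H + 1, ω, b => iterRun st H (fun h => ω h.succ) (st (ω 0) b)


/-! ### Auxiliary lemmas -/

section Aux

lemma tangent_le' {f : ℝ → ℝ} (hc : ConvexOn ℝ Set.univ f) (hd : Differentiable ℝ f)
    (z y : ℝ) : f z + deriv f z * (y - z) ≤ f y := by
  rcases lt_trichotomy z y with h | h | h
  · have := hc.deriv_le_slope (Set.mem_univ z) (Set.mem_univ y) h (hd z)
    rw [slope_def_field] at this
    have hyz : (0:ℝ) < y - z := by linarith
    rw [le_div_iff₀ hyz] at this
    nlinarith
  · simp [h]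
  · have := hc.slope_le_deriv (Set.mem_univ y) (Set.mem_univ z) h (hd z)
    rw [slope_def_field] at this
    have hzy : (0:ℝ) < z - y := by linarith
    rw [div_le_iff₀ hzy] at this
    nlinarith

lemma fenchelYoung {f g : ℝ → ℝ} (hfg : IsFenchelConj f g) (u z : ℝ) :
    u * z - f z ≤ g u := (hfg u).1 ⟨z, rfl⟩

lemma smooth_quad_ub {γ : ℝ} (hγ : 0 < γ) {f : ℝ → ℝ} (hf : SmoothWith (1/γ) f)
    (y y' : ℝ) : f y' ≤ f y + deriv f y * (y' - y) + 1/(2*γ) * (y' - y)^2 := by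
  obtain ⟨hd, hlip⟩ := hf
  set h := y' - y with hh
  set g : ℝ → ℝ := fun t => f (y + t*h) - t * (deriv f y * h) - t^2 * (h^2/(2*γ)) with hg
  have hgd : ∀ t : ℝ, HasDerivAt g
      (deriv f (y + t*h) * h - deriv f y * h - 2*t * (h^2/(2*γ))) t := by
    intro t
    have h1 : HasDerivAt (fun t : ℝ => y + t*h) h t := by
      simpa using ((hasDerivAt_id t).mul_const h).const_add y
    have h2 : HasDerivAt (fun t : ℝ => f (y + t*h)) (deriv f (y + t*h) * h) t :=
      ((hd (y + t*h)).hasDerivAt).comp t h1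
    have h3 : HasDerivAt (fun t : ℝ => t * (deriv f y * h)) (deriv f y * h) t := by
      simpa using (hasDerivAt_id t).mul_const (deriv f y * h)
    have h4 : HasDerivAt (fun t : ℝ => t^2 * (h^2/(2*γ))) (2*t * (h^2/(2*γ))) t := by
      have := (hasDerivAt_pow 2 t).mul_const (h^2/(2*γ))
      simpa [mul_comm, mul_assoc] using this
    exact (h2.sub h3).sub h4
  have hdg : Differentiable ℝ g := fun t => (hgd t).differentiableAt
  have hanti : AntitoneOn g (Set.Icc (0:ℝ) 1) := by
    apply antitoneOn_of_deriv_nonpos (convex_Icc 0 1)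
    · exact hdg.continuous.continuousOn
    · intro t ht
      exact (hdg t).differentiableWithinAt
    · intro t ht
      rw [interior_Icc] at ht
      rw [(hgd t).deriv]
      have hb := hlip (y + t*h) y
      have habs : |deriv f (y + t*h) - deriv f y| ≤ 1/γ * (t * |h|) := by
        have : |y + t*h - y| = |t| * |h| := by rw [show y + t*h - y = t*h by ring, abs_mul]
        rw [this] at hb
        calc |deriv f (y + t*h) - deriv f y| ≤ 1/γ * (|t| * |h|) := hb
        _ = 1/γ * (t * |h|) := by rw [abs_of_pos ht.1]
      set a := deriv f (y + t*h) - deriv f y with ha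
      have h1 : a * h ≤ |a| * |h| := by
        calc a * h ≤ |a * h| := le_abs_self _
        _ = |a| * |h| := abs_mul _ _
      have h2 : |a| * |h| ≤ (1/γ * (t * |h|)) * |h| :=
        mul_le_mul_of_nonneg_right habs (abs_nonneg h)
      have h3 : (1/γ * (t * |h|)) * |h| = t * h^2 / γ := by
        rw [show (1/γ * (t * |h|)) * |h| = t * (|h| * |h|) / γ by ring, abs_mul_abs_self]; ring
      have h4 : 2*t * (h^2/(2*γ)) = t * h^2 / γ := by field_simp
      have hfact : deriv f (y + t*h) * h - deriv f y * h = a * h := by rw [ha]; ring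
      rw [hfact, h4]
      have h6 : a * h ≤ t * h^2/γ := by rw [← h3]; exact h1.trans h2
      linarith
  have h10 : g 1 ≤ g 0 := hanti (Set.mem_Icc.mpr ⟨le_refl 0, zero_le_one⟩)
    (Set.mem_Icc.mpr ⟨zero_le_one, le_refl 1⟩) zero_le_one
  have hg1 : g 1 = f y' - deriv f y * h - h^2/(2*γ) := by
    simp only [hg]
    have : y + 1*h = y' := by rw [hh]; ring
    rw [this]; ring
  have hg0 : g 0 = f y := by simp [hg]
  rw [hg1, hg0] at h10
  have : 1/(2*γ) * h^2 = h^2/(2*γ) := by ring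
  linarith [h10, this.ge]

lemma conj_lb {γ : ℝ} (hγ : 0 < γ) {f g : ℝ → ℝ} (hf : SmoothWith (1/γ) f)
    (hfg : IsFenchelConj f g) (u y : ℝ) :
    u * y - f y + γ/2 * (u - deriv f y)^2 ≤ g u := by
  set q := u - deriv f y with hq
  clear_value q
  have hz := fenchelYoung hfg u (y + γ*q)
  have hquad := smooth_quad_ub hγ hf y (y + γ*q)
  have key : u * (y + γ*q) - (f y + deriv f y * (y + γ*q - y) + 1/(2*γ) * (y + γ*q - y)^2)
      = u * y - f y + γ/2 * q^2 := by
    have h1 : deriv f y = u - q := by rw [hq]; ring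
    rw [h1]
    have h2 : (y + γ*q - y) = γ*q := by ring
    rw [h2]
    have h3 : 1/(2*γ) * (γ*q)^2 = γ/2 * q^2 := by
      field_simp
    rw [h3]; ring
  linarith [hz, hquad, key]

lemma conj_eq_at_deriv {f g : ℝ → ℝ} (hc : ConvexOn ℝ Set.univ f) (hd : Differentiable ℝ f)
    (hfg : IsFenchelConj f g) (z : ℝ) :
    g (deriv f z) = deriv f z * z - f z := by
  have h1 : deriv f z * z - f z ≤ g (deriv f z) := fenchelYoung hfg _ z
  have h2 : g (deriv f z) ≤ deriv f z * z - f z := by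
    apply (hfg (deriv f z)).2
    rintro r ⟨y, rfl⟩
    show deriv f z * y - f y ≤ deriv f z * z - f z
    have := tangent_le' hc hd z y
    nlinarith
  linarith

lemma conj_strong_convex {γ : ℝ} (hγ : 0 < γ) {f g : ℝ → ℝ} (hf : SmoothWith (1/γ) f)
    (hfg : IsFenchelConj f g) (u v t : ℝ) (ht0 : 0 ≤ t) (ht1 : t ≤ 1) :
    g (t*u + (1-t)*v) ≤ t * g u + (1-t) * g v - γ/2 * (t*(1-t)) * (u-v)^2 := by
  apply le_of_forall_pos_le_add
  intro ε hε
  obtain ⟨r, hr, hy, -⟩ := (hfg (t*u + (1-t)*v)).exists_between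
    (show g (t*u + (1-t)*v) - ε < g (t*u + (1-t)*v) by linarith)
  obtain ⟨y, rfl⟩ := hr
  have lu := conj_lb hγ hf hfg u y
  have lv := conj_lb hγ hf hfg v y
  have l1 : t * (u*y - f y + γ/2*(u - deriv f y)^2) ≤ t * g u :=
    mul_le_mul_of_nonneg_left lu ht0
  have l2 : (1-t) * (v*y - f y + γ/2*(v - deriv f y)^2) ≤ (1-t) * g v :=
    mul_le_mul_of_nonneg_left lv (by linarith)
  have hvar : t*(1-t)*(u-v)^2 ≤ t*(u - deriv f y)^2 + (1-t)*(v - deriv f y)^2 := by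
    nlinarith [sq_nonneg (t*(u - deriv f y) + (1-t)*(v - deriv f y))]
  have hvar2 : γ/2 * (t*(1-t)*(u-v)^2) ≤ γ/2 * (t*(u - deriv f y)^2 + (1-t)*(v - deriv f y)^2) :=
    mul_le_mul_of_nonneg_left hvar (by linarith)
  have hy' : g (t*u + (1-t)*v) - ε < (t*u + (1-t)*v) * y - f y := hy
  nlinarith [l1, l2, hvar2, hy']

/-! vector algebra -/

lemma sqnorm_nonneg' {m : ℕ} (v : Fin m → ℝ) : 0 ≤ sqnorm v :=
  Finset.sum_nonneg fun _ _ => sq_nonneg _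

lemma dotp_add_left' {m : ℕ} (u v w : Fin m → ℝ) :
    dotp (u + v) w = dotp u w + dotp v w := by
  simp only [dotp, Pi.add_apply, add_mul]
  exact Finset.sum_add_distrib

lemma dotp_comm' {m : ℕ} (u v : Fin m → ℝ) : dotp u v = dotp v u := by
  simp only [dotp, mul_comm]

lemma sqnorm_eq_dotp {m : ℕ} (v : Fin m → ℝ) : sqnorm v = dotp v v := by
  simp only [sqnorm, dotp, sq]

lemma sqnorm_add_smul {m : ℕ} (w v : Fin m → ℝ) (t : ℝ) :
    sqnorm (w + t • v) = sqnorm w + 2*t*dotp w v + t^2 * sqnorm v := by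
  simp only [sqnorm, dotp, Pi.add_apply, Pi.smul_apply, smul_eq_mul]
  rw [Finset.mul_sum, Finset.mul_sum, ← Finset.sum_add_distrib, ← Finset.sum_add_distrib]
  exact Finset.sum_congr rfl fun j _ => by ring

lemma sqnorm_add' {m : ℕ} (u v : Fin m → ℝ) :
    sqnorm (u + v) = sqnorm u + 2*dotp u v + sqnorm v := by
  have := sqnorm_add_smul u v 1
  simpa using this

lemma two_dotp_le {m : ℕ} (u v : Fin m → ℝ) :
    2 * dotp u v ≤ sqnorm u + sqnorm v := by
  have h := sqnorm_nonneg' (u + (-1 : ℝ) • v)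
  rw [sqnorm_add_smul] at h
  nlinarith

lemma sum_sub_single {ι : Type*} [Fintype ι] [DecidableEq ι] {M : Type*} [AddCommGroup M]
    (F G : ι → M) (i : ι) (h : ∀ j, j ≠ i → F j = G j) :
    ∑ j, F j = (∑ j, G j) + (F i - G i) := by
  rw [← Finset.add_sum_erase _ F (Finset.mem_univ i),
      ← Finset.add_sum_erase _ G (Finset.mem_univ i)]
  rw [Finset.sum_congr rfl (fun j hj => h j (Finset.ne_of_mem_erase hj))]
  abel

variable {n d K : ℕ}

lemma blkA_update (lam : ℝ) (x : Fin n → Fin d → ℝ) (part : Fin n → Fin K) (k : Fin K)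
    (β : {i : Fin n // part i = k} → ℝ) (i : {i : Fin n // part i = k}) (c : ℝ) :
    blkA lam x part k (Function.update β i c)
      = blkA lam x part k β + ((c - β i)/(lam*(n:ℝ))) • x i.1 := by
  unfold blkA
  rw [sum_sub_single (fun i' => (Function.update β i c i' / (lam * ↑n)) • x i'.1)
      (fun i' => (β i' / (lam * ↑n)) • x i'.1) i
      (fun j hj => by simp [Function.update_of_ne hj])]
  rw [Function.update_self]
  congr 1
  rw [← sub_smul, ← sub_div]

lemma dotp_blkA (lam : ℝ) (x : Fin n → Fin d → ℝ) (part : Fin n → Fin K) (k : Fin K)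
    (w : Fin d → ℝ) (β : {i : Fin n // part i = k} → ℝ) :
    dotp w (blkA lam x part k β)
      = ∑ i : {i : Fin n // part i = k}, β i / (lam*(n:ℝ)) * dotp w (x i.1) := by
  simp only [dotp, blkA, Finset.sum_apply, Pi.smul_apply, smul_eq_mul, Finset.mul_sum]
  rw [Finset.sum_comm]
  exact Finset.sum_congr rfl fun i _ => Finset.sum_congr rfl fun j _ => by ring

end Aux

section Key

set_option maxHeartbeats 2000000 in
lemma key_step {n d K : ℕ} (hn : 0 < n)
    (lam γ : ℝ) (hlam : 0 < lam) (hγ : 0 < γ)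
    (x : Fin n → Fin d → ℝ) (hx : ∀ i, euclNorm (x i) ≤ 1)
    (l lstar : Fin n → ℝ → ℝ)
    (hconj : ∀ i, IsFenchelConj (l i) (lstar i))
    (hconv : ∀ i, ConvexOn ℝ Set.univ (l i))
    (hsmooth : ∀ i, SmoothWith (1 / γ) (l i))
    (part : Fin n → Fin K) (k : Fin K) (wbar : Fin d → ℝ)
    (βstar : {i : Fin n // part i = k} → ℝ)
    (hβstar : ∀ β, locDual lam x lstar part k wbar β ≤ locDual lam x lstar part k wbar βstar)
    (st : {i : Fin n // part i = k} → ({i : Fin n // part i = k} → ℝ) →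
      ({i : Fin n // part i = k} → ℝ))
    (hst_max : ∀ i β c,
      locDual lam x lstar part k wbar (Function.update β i c)
        ≤ locDual lam x lstar part k wbar (st i β))
    (s : ℝ) (hs : s = lam * n * γ / (1 + lam * n * γ))
    (β : {i : Fin n // part i = k} → ℝ) :
    s * (locDual lam x lstar part k wbar βstar - locDual lam x lstar part k wbar β)
      ≤ ∑ i : {i : Fin n // part i = k},
          (locDual lam x lstar part k wbar (st i β) - locDual lam x lstar part k wbar β) := by
  have hn' : (0:ℝ) < (n:ℝ) := by exact_mod_cast hn
  have hL : (0:ℝ) < lam * n * γ := by positivity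
  have hs0 : 0 ≤ s := by rw [hs]; positivity
  have hs1 : s ≤ 1 := by
    rw [hs, div_le_one (by linarith)]; linarith
  set D := locDual lam x lstar part k wbar with hD
  set v := blkA lam x part k β with hv
  set w : Fin d → ℝ := wbar + v with hw
  set z : {i : Fin n // part i = k} → ℝ := fun i => dotp w (x i.1) with hz
  set G : {i : Fin n // part i = k} → ℝ :=
    fun i => l i.1 (z i) + lstar i.1 (-(β i)) + β i * z i with hG
  set P : ℝ := (1/(n:ℝ)) * (∑ i : {i : Fin n // part i = k}, l i.1 (z i))
      + lam/2 * sqnorm v with hP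
  clear_value D v w z G P
  have hXle : ∀ i : Fin n, sqnorm (x i) ≤ 1 := by
    intro i
    have h1 := hx i
    have h2 : 0 ≤ sqnorm (x i) := sqnorm_nonneg' _
    have h3 : euclNorm (x i) ^ 2 = sqnorm (x i) := Real.sq_sqrt h2
    have h4 : 0 ≤ euclNorm (x i) := Real.sqrt_nonneg _
    nlinarith [h1, h3, h4]
  -- sum of β_i z_i in terms of dotp
  have hbz_sum : ∀ β' : {i : Fin n // part i = k} → ℝ,
      ∑ i : {i : Fin n // part i = k}, β' i * dotp w (x i.1)
        = lam * (n:ℝ) * dotp w (blkA lam x part k β') := by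
    intro β'
    rw [dotp_blkA, Finset.mul_sum]
    exact Finset.sum_congr rfl fun i _ => by field_simp
  -- the gap identity
  have hGsum : ∑ i : {i : Fin n // part i = k}, G i = (n:ℝ) * (P - D β) := by
    simp only [hG, hP, hD, locDual, ← hv]
    rw [Finset.sum_add_distrib, Finset.sum_add_distrib]
    have h2 : ∑ i : {i : Fin n // part i = k}, β i * z i = lam * (n:ℝ) * dotp w v := by
      simp only [hz]; rw [hbz_sum β, ← hv]
    rw [h2]
    have h3 : sqnorm (wbar + v) = sqnorm wbar + 2*dotp wbar v + sqnorm v := sqnorm_add' _ _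
    have h4 : dotp w v = dotp wbar v + sqnorm v := by
      rw [hw, dotp_add_left', sqnorm_eq_dotp]
    rw [h3, h4]
    field_simp
    ring
  -- weak duality
  have hweak : D βstar ≤ P := by
    have hFY : ∀ i : {i : Fin n // part i = k},
        -(lstar i.1 (-(βstar i))) ≤ βstar i * z i + l i.1 (z i) := by
      intro i
      have := fenchelYoung (hconj i.1) (-(βstar i)) (z i)
      linarith
    have hsum : -(∑ i : {i : Fin n // part i = k}, lstar i.1 (-(βstar i)))
        ≤ (∑ i : {i : Fin n // part i = k}, βstar i * z i)
          + ∑ i : {i : Fin n // part i = k}, l i.1 (z i) := by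
      rw [← Finset.sum_neg_distrib, ← Finset.sum_add_distrib]
      exact Finset.sum_le_sum fun i _ => hFY i
    set v' := blkA lam x part k βstar with hv'
    have h2 : ∑ i : {i : Fin n // part i = k}, βstar i * z i = lam * (n:ℝ) * dotp w v' := by
      simp only [hz]; rw [hbz_sum βstar, ← hv']
    have h3 : sqnorm (wbar + v') = sqnorm wbar + 2*dotp wbar v' + sqnorm v' := sqnorm_add' _ _
    have h4 : dotp w v' = dotp wbar v' + dotp v v' := by rw [hw, dotp_add_left']
    have h5 : 2 * dotp v v' ≤ sqnorm v + sqnorm v' := two_dotp_le v v'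
    simp only [hD, locDual, ← hv']
    rw [h3]
    rw [h2, h4] at hsum
    have hDexp : -(lam / 2) * (sqnorm wbar + 2*dotp wbar v' + sqnorm v')
          - 1/(n:ℝ) * ∑ i : {i : Fin n // part i = k}, lstar i.1 (-(βstar i))
          + lam / 2 * sqnorm wbar
        ≤ -(lam / 2) * (sqnorm wbar + 2*dotp wbar v' + sqnorm v')
          + 1/(n:ℝ) * (lam * (n:ℝ) * (dotp wbar v' + dotp v v')
              + ∑ i : {i : Fin n // part i = k}, l i.1 (z i))
          + lam / 2 * sqnorm wbar := by
      have := mul_le_mul_of_nonneg_left hsum (show (0:ℝ) ≤ 1/(n:ℝ) by positivity)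
      linarith [this]
    refine le_trans hDexp ?_
    rw [hP]
    have hc : 1/(n:ℝ) * (lam * (n:ℝ) * (dotp wbar v' + dotp v v')
          + ∑ i : {i : Fin n // part i = k}, l i.1 (z i))
        = lam * (dotp wbar v' + dotp v v')
          + 1/(n:ℝ) * ∑ i : {i : Fin n // part i = k}, l i.1 (z i) := by
      field_simp
    have hq : lam * dotp v v' - lam/2 * sqnorm v' ≤ lam/2 * sqnorm v := by nlinarith
    linarith [hc, hq]
  -- per-coordinate improvement
  have himp : ∀ i : {i : Fin n // part i = k}, s/(n:ℝ) * G i ≤ D (st i β) - D β := by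
    intro i
    set b := deriv (l i.1) (z i) with hb
    set c := β i + s * (-b - β i) with hc
    have hupd : D (Function.update β i c) ≤ D (st i β) := hst_max i β c
    set X := sqnorm (x i.1) with hX
    clear_value c b X
    have hX0 : 0 ≤ X := by rw [hX]; exact sqnorm_nonneg' _
    have hX1 : X ≤ 1 := by rw [hX]; exact hXle i.1
    -- dual change identity
    have hDupd : D (Function.update β i c) - D β
        = -(s*(-b - β i)*(z i))/(n:ℝ) - s^2*(-b - β i)^2*X/(2*lam*(n:ℝ)^2)
          - (1/(n:ℝ)) * (lstar i.1 (-c) - lstar i.1 (-(β i))) := by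
      simp only [hD, locDual, ← hv]
      rw [blkA_update, ← hv, ← add_assoc, ← hw]
      rw [sqnorm_add_smul]
      rw [sum_sub_single (fun i' => lstar i'.1 (-(Function.update β i c i')))
          (fun i' => lstar i'.1 (-(β i'))) i
          (fun j hj => by simp [Function.update_of_ne hj])]
      simp only [Function.update_self]
      have hct : c - β i = s * (-b - β i) := by rw [hc]; ring
      rw [hct]
      have hzi : dotp w (x i.1) = z i := by rw [hz]
      rw [hzi, ← hX]
      field_simp
      ring
    -- strong convexity bound
    have hbzeq : lstar i.1 b = b * z i - l i.1 (z i) := by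
      rw [hb]
      exact conj_eq_at_deriv (hconv i.1) (hsmooth i.1).1 (hconj i.1) (z i)
    have hsc : lstar i.1 (-c) ≤ s * lstar i.1 b + (1-s) * lstar i.1 (-(β i))
        - γ/2 * (s*(1-s)) * (b - (-(β i)))^2 := by
      have h := conj_strong_convex hγ (hsmooth i.1) (hconj i.1) b (-(β i)) s hs0 hs1
      have hcc : -c = s*b + (1-s)*(-(β i)) := by rw [hc]; ring
      rw [hcc]
      exact h
    rw [hbzeq] at hsc
    -- coefficient inequality
    have hcoef : s * X / (lam*(n:ℝ)) ≤ γ * (1-s) := by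
      have he : s / (lam*(n:ℝ)) = γ * (1-s) := by
        rw [hs]; field_simp; ring
      have h7 : s * X ≤ s := by nlinarith
      have h8 : (0:ℝ) < lam*(n:ℝ) := by positivity
      have h9 : s * X / (lam*(n:ℝ)) ≤ s / (lam*(n:ℝ)) := by
        rw [div_le_div_iff₀ h8 h8]
        nlinarith
      linarith [h9, he.le]
    have hQ0 : (0:ℝ) ≤ (b - (-(β i)))^2 := sq_nonneg _
    have hcoef2 : s^2*(-b - β i)^2*X/(2*lam*(n:ℝ)^2)
        ≤ γ/2*(s*(1-s))*(b - (-(β i)))^2/(n:ℝ) := by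
      have h1 := mul_le_mul_of_nonneg_left hcoef
        (show (0:ℝ) ≤ s*(b - (-(β i)))^2/(2*(n:ℝ)) by positivity)
      calc s^2*(-b - β i)^2*X/(2*lam*(n:ℝ)^2)
          = s*(b - (-(β i)))^2/(2*(n:ℝ)) * (s * X/(lam*(n:ℝ))) := by
            field_simp; ring
        _ ≤ s*(b - (-(β i)))^2/(2*(n:ℝ)) * (γ*(1-s)) := h1
        _ = γ/2*(s*(1-s))*(b - (-(β i)))^2/(n:ℝ) := by ring
    have hsc' := mul_le_mul_of_nonneg_left hsc (show (0:ℝ) ≤ 1/(n:ℝ) by positivity)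
    have hfin : s/(n:ℝ) * (l i.1 (z i) + lstar i.1 (-(β i)) + β i * z i)
        ≤ -(s*(-b - β i)*(z i))/(n:ℝ) - s^2*(-b - β i)^2*X/(2*lam*(n:ℝ)^2)
          - (1/(n:ℝ)) * (lstar i.1 (-c) - lstar i.1 (-(β i))) := by
      ring_nf at hsc' hcoef2 ⊢
      linarith [hsc', hcoef2]
    simp only [hG]
    linarith [hfin, hDupd, hupd]
  -- combine
  calc s * (D βstar - D β) ≤ s * (P - D β) :=
        mul_le_mul_of_nonneg_left (by linarith [hweak]) hs0
    _ = (s/(n:ℝ)) * ((n:ℝ) * (P - D β)) := by field_simp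
    _ = (s/(n:ℝ)) * ∑ i : {i : Fin n // part i = k}, G i := by rw [hGsum]
    _ = ∑ i : {i : Fin n // part i = k}, s/(n:ℝ) * G i := by rw [Finset.mul_sum]
    _ ≤ ∑ i : {i : Fin n // part i = k}, (D (st i β) - D β) :=
        Finset.sum_le_sum fun i _ => himp i

end Key
set_option maxHeartbeats 1000000 in
/-- geometric convergence of LocalSDCA on the local subproblem. -/
theorem localSDCA_local_convergence
    (n d K : ℕ) (hn : 0 < n) (hd : 0 < d) (hK : 0 < K)
    (lam γ : ℝ) (hlam : 0 < lam) (hγ : 0 < γ)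
    (x : Fin n → Fin d → ℝ) (hx : ∀ i, euclNorm (x i) ≤ 1)
    (l lstar : Fin n → ℝ → ℝ)
    (hconj : ∀ i, IsFenchelConj (l i) (lstar i))
    (hconv : ∀ i, ConvexOn ℝ Set.univ (l i))
    (hsmooth : ∀ i, SmoothWith (1 / γ) (l i))
    (part : Fin n → Fin K) (k : Fin K) (hk : ∃ i, part i = k)
    (wbar : Fin d → ℝ)
    (βstar : {i : Fin n // part i = k} → ℝ)
    (hβstar : ∀ β, locDual lam x lstar part k wbar β ≤ locDual lam x lstar part k wbar βstar)
    (β0 : {i : Fin n // part i = k} → ℝ) (H : ℕ)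
    -- one LocalSDCA step on coordinate `i`: replace `β i` by the maximizing value
    (st : {i : Fin n // part i = k} → ({i : Fin n // part i = k} → ℝ) →
      ({i : Fin n // part i = k} → ℝ))
    (hst_coord : ∀ i β j, j ≠ i → st i β j = β j)
    (hst_max : ∀ i β c,
      locDual lam x lstar part k wbar (Function.update β i c)
        ≤ locDual lam x lstar part k wbar (st i β))
    (s : ℝ) (hs : s = lam * n * γ / (1 + lam * n * γ)) :
    -- E[D_k(β*;w̄) − D_k(β^(H);w̄)], averaging over the uniformly chosen coordinates
    (∑ ω : Fin H → {i : Fin n // part i = k},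
        (locDual lam x lstar part k wbar βstar
          - locDual lam x lstar part k wbar (iterRun st H ω β0)))
      / (Fintype.card {i : Fin n // part i = k} : ℝ) ^ H
    ≤ (1 - s / (Fintype.card {i : Fin n // part i = k} : ℝ)) ^ H *
        (locDual lam x lstar part k wbar βstar - locDual lam x lstar part k wbar β0) := by
  obtain ⟨i0, hi0⟩ := hk
  haveI hne : Nonempty {i : Fin n // part i = k} := ⟨⟨i0, hi0⟩⟩
  have hn' : (0:ℝ) < (n:ℝ) := by exact_mod_cast hn
  have hL : (0:ℝ) < lam * n * γ := by positivity
  have hs0 : 0 ≤ s := by rw [hs]; positivity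
  have hs1 : s ≤ 1 := by rw [hs, div_le_one (by linarith)]; linarith
  set D := locDual lam x lstar part k wbar with hD
  set N : ℝ := (Fintype.card {i : Fin n // part i = k} : ℝ) with hN
  have hN1 : (1:ℝ) ≤ N := by
    rw [hN]
    exact_mod_cast Fintype.card_pos
  have hN0 : (0:ℝ) < N := by linarith
  have hgap : ∀ b, 0 ≤ D βstar - D b := fun b => by linarith [hβstar b]
  have hfrac0 : 0 ≤ 1 - s / N := by
    have : s / N ≤ s := div_le_self hs0 hN1
    linarith
  have hkey : ∀ b : {i : Fin n // part i = k} → ℝ,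
      ∑ i : {i : Fin n // part i = k}, (D βstar - D (st i b))
        ≤ (N - s) * (D βstar - D b) := by
    intro b
    have h := key_step hn lam γ hlam hγ x hx l lstar hconj hconv hsmooth part k wbar
      βstar hβstar st hst_max s hs b
    rw [← hD] at h
    have e1 : ∑ i : {i : Fin n // part i = k}, (D βstar - D (st i b))
        = N * (D βstar - D b)
          - ∑ i : {i : Fin n // part i = k}, (D (st i b) - D b) := by
      rw [Finset.sum_congr rfl
        (fun (i : {i : Fin n // part i = k}) _ =>
          show D βstar - D (st i b) = (D βstar - D b) - (D (st i b) - D b) by ring)]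
      rw [Finset.sum_sub_distrib, Finset.sum_const, Finset.card_univ, nsmul_eq_mul, hN]
    rw [e1]
    linarith [h]
  clear hst_coord hβstar hst_max hconj hconv hsmooth hx hi0
  induction H generalizing β0 with
  | zero => simp [iterRun]
  | succ H ih =>
    have hsum : (∑ ω : Fin (H+1) → {i : Fin n // part i = k},
          (D βstar - D (iterRun st (H+1) ω β0)))
        = ∑ i : {i : Fin n // part i = k}, ∑ ωt : Fin H → {i : Fin n // part i = k},
            (D βstar - D (iterRun st H ωt (st i β0))) := by
      rw [← Equiv.sum_comp (Fin.consEquiv (fun _ : Fin (H+1) => {i : Fin n // part i = k}))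
        (fun ω => D βstar - D (iterRun st (H+1) ω β0))]
      rw [Fintype.sum_prod_type]
      refine Finset.sum_congr rfl fun i _ => Finset.sum_congr rfl fun ωt _ => ?_
      have h3 : iterRun st (H+1)
          (Fin.consEquiv (fun _ : Fin (H+1) => {i : Fin n // part i = k}) (i, ωt)) β0
          = iterRun st H ωt (st i β0) := by
        show iterRun st (H+1) (Fin.cons i ωt) β0 = iterRun st H ωt (st i β0)
        simp only [iterRun, Fin.cons_zero, Fin.cons_succ]
      rw [h3]
    have hstep : ∀ i : {i : Fin n // part i = k},
        ∑ ωt : Fin H → {i : Fin n // part i = k},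
            (D βstar - D (iterRun st H ωt (st i β0)))
          ≤ N^H * ((1 - s/N)^H * (D βstar - D (st i β0))) := by
      intro i
      have h2 := ih (st i β0)
      rw [div_le_iff₀ (pow_pos hN0 H)] at h2
      linarith [h2]
    have htot : ∑ i : {i : Fin n // part i = k}, ∑ ωt : Fin H → {i : Fin n // part i = k},
          (D βstar - D (iterRun st H ωt (st i β0)))
        ≤ N^H * ((1 - s/N)^H * ((N - s) * (D βstar - D β0))) := by
      calc ∑ i : {i : Fin n // part i = k}, ∑ ωt : Fin H → {i : Fin n // part i = k},
            (D βstar - D (iterRun st H ωt (st i β0)))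
          ≤ ∑ i : {i : Fin n // part i = k},
              N^H * ((1 - s/N)^H * (D βstar - D (st i β0))) :=
            Finset.sum_le_sum fun i _ => hstep i
        _ = N^H * ((1 - s/N)^H * ∑ i : {i : Fin n // part i = k},
              (D βstar - D (st i β0))) := by
            rw [← Finset.mul_sum, ← Finset.mul_sum]
        _ ≤ N^H * ((1 - s/N)^H * ((N - s) * (D βstar - D β0))) := by
            apply mul_le_mul_of_nonneg_left
              (mul_le_mul_of_nonneg_left (hkey β0) (pow_nonneg hfrac0 H))
              (pow_nonneg (le_of_lt hN0) H)
    rw [hsum, div_le_iff₀ (pow_pos hN0 (H+1))]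
    have hNs : (1 - s/N) * N = N - s := by field_simp
    have e : (1 - s/N)^(H+1) * (D βstar - D β0) * N^(H+1)
        = N^H * ((1 - s/N)^H * (((1 - s/N) * N) * (D βstar - D β0))) := by
      rw [pow_succ, pow_succ]; ring
    rw [e, hNs]
    exact htot
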